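/- Let V = V₁ ⊕ V₂ be a direct sum of finite-dimensional real vector spaces. Let a be an alternating bilinear form on V such that a(v₁, v₂) = 0 for all v₁ ∈ V₁, v₂ ∈ V₂ and such that the restriction of a to V₁ is nondegenerate. Let ω be a nondegenerate alternating bilinear form on V₂, extended to V by zero on V₁ and on cross terms. Then there exists K₀ > 0 such that for all K ≥ K₀ the form a + K·ω on V is nondegenerate. -/

import Mathlib

lemma aux_det_add_smul {n : Type*} [Fintype n] [DecidableEq n]
    (M N : Matrix n n ℝ) (hN : N.det ≠ 0) :
    ∃ K₀ : ℝ, 0 < K₀ ∧ ∀ K : ℝ, K₀ ≤ K → (M + K • N).det ≠ 0 := by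
  have hcont : Continuous fun t : ℝ => (N + t • M).det :=
    (continuous_const.add (continuous_id.smul continuous_const)).matrix_det
  have h0 : (N + (0:ℝ) • M).det ≠ 0 := by simpa using hN
  have hev : ∀ᶠ t in nhds (0:ℝ), (N + t • M).det ≠ 0 :=
    hcont.continuousAt.eventually_ne h0
  obtain ⟨ε, hε, hball⟩ := Metric.eventually_nhds_iff.mp hev
  refine ⟨ε⁻¹ + 1, by positivity, fun K hK => ?_⟩
  have hKpos : 0 < K := lt_of_lt_of_le (by positivity) hK
  have hKinv : K⁻¹ < ε := by
    have h1 : ε⁻¹ < K := lt_of_lt_of_le (lt_add_one _) hK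
    have := (inv_lt_inv₀ hKpos (by positivity)).mpr h1
    simpa using this
  have hdist : dist K⁻¹ (0:ℝ) < ε := by
    rw [Real.dist_eq, sub_zero, abs_of_pos (by positivity)]; exact hKinv
  have hne := hball hdist
  have heq : M + K • N = K • (N + K⁻¹ • M) := by
    rw [smul_add, smul_smul, mul_inv_cancel₀ hKpos.ne', one_smul, add_comm]
  rw [heq, Matrix.det_smul]
  exact mul_ne_zero (pow_ne_zero _ hKpos.ne') hne

/-- Weak coupling limit, linear algebra version: on `V = V₁ × V₂`, if `a` is an
alternating bilinear form vanishing on cross terms whose restriction to `V₁` is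
nondegenerate, and `ω` is a nondegenerate alternating bilinear form on `V₂`
(extended by zero), then `a + K·ω` is nondegenerate for all sufficiently large `K`. -/
theorem stmt2 (V₁ V₂ : Type*)
    [AddCommGroup V₁] [Module ℝ V₁] [FiniteDimensional ℝ V₁]
    [AddCommGroup V₂] [Module ℝ V₂] [FiniteDimensional ℝ V₂]
    (a : (V₁ × V₂) →ₗ[ℝ] (V₁ × V₂) →ₗ[ℝ] ℝ)
    (ha_alt : ∀ v, a v v = 0)
    (ha_cross : ∀ (v₁ : V₁) (v₂ : V₂), a (v₁, 0) (0, v₂) = 0)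
    (ha_nd : ∀ v₁ : V₁, (∀ w₁ : V₁, a (v₁, 0) (w₁, 0) = 0) → v₁ = 0)
    (ω : V₂ →ₗ[ℝ] V₂ →ₗ[ℝ] ℝ)
    (hω_alt : ∀ v, ω v v = 0)
    (hω_nd : ∀ v₂ : V₂, (∀ w₂ : V₂, ω v₂ w₂ = 0) → v₂ = 0) :
    ∃ K₀ : ℝ, 0 < K₀ ∧ ∀ K : ℝ, K₀ ≤ K →
      ∀ v : V₁ × V₂, (∀ w : V₁ × V₂, a v w + K * ω v.2 w.2 = 0) → v = 0 := by
  -- antisymmetry of `a`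
  have ha_anti : ∀ x y, a x y = - a y x := by
    intro x y
    have h := ha_alt (x + y)
    simp only [map_add, LinearMap.add_apply, ha_alt] at h
    linarith
  -- restriction of `a` to `V₂`
  set a₂ : V₂ →ₗ[ℝ] V₂ →ₗ[ℝ] ℝ :=
    a.compl₁₂ (LinearMap.inr ℝ V₁ V₂) (LinearMap.inr ℝ V₁ V₂) with ha₂
  have ha₂_apply : ∀ x y : V₂, a₂ x y = a (0, x) (0, y) := fun _ _ => rfl
  -- basis and matrices
  let b := Module.finBasis ℝ V₂
  have hωnd : (LinearMap.BilinForm.toMatrix b ω).det ≠ 0 := by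
    rw [← LinearMap.BilinForm.nondegenerate_iff_det_ne_zero b]
    exact LinearMap.BilinForm.Nondegenerate.ofSeparatingLeft hω_nd
  obtain ⟨K₀, hK₀, hdet⟩ :=
    aux_det_add_smul (LinearMap.BilinForm.toMatrix b a₂) (LinearMap.BilinForm.toMatrix b ω) hωnd
  refine ⟨K₀, hK₀, fun K hK v hv => ?_⟩
  -- nondegeneracy of a₂ + K • ω
  have hnd : LinearMap.BilinForm.Nondegenerate (a₂ + K • ω) := by
    rw [LinearMap.BilinForm.nondegenerate_iff_det_ne_zero b]
    rw [map_add, map_smul]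
    exact hdet K hK
  -- first: v.1 = 0
  have hv1 : v.1 = 0 := by
    apply ha_nd
    intro w₁
    have h := hv (w₁, 0)
    simp only [map_zero] at h
    have hav : a v (w₁, 0) = 0 := by linarith
    have hsplit : v = ((v.1, 0) : V₁ × V₂) + ((0 : V₁), v.2) := by simp
    rw [hsplit, map_add, LinearMap.add_apply] at hav
    have hc : a ((0 : V₁), v.2) (w₁, 0) = 0 := by
      rw [ha_anti]; rw [ha_cross]; ring
    linarith
  -- then: v.2 = 0
  have hv2 : v.2 = 0 := by
    refine hnd.1 v.2 fun w₂ => ?_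
    have h := hv (0, w₂)
    have hvrw : v = ((0 : V₁), v.2) := by rw [← hv1]
    rw [hvrw] at h
    simp only [LinearMap.add_apply, LinearMap.smul_apply, smul_eq_mul, ha₂_apply]
    simpa using h
  exact Prod.ext hv1 hv2
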